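/- For real a with 0 < a < 1 and b, T > 0, the truncated integral (1/(2πi)) ∫_{b−iT}^{b+iT} aˢ/(s(s+1)) ds equals R₂, where |R₂| ≪ a^b · min(1/T, 1/(T² |log a|)). -/

import Mathlib

open Complex intervalIntegral Set

noncomputable def pf (a : ℝ) (s : ℂ) : ℂ := (a:ℂ)^s / (s * (s+1))

lemma pf_norm {a : ℝ} (ha : 0 < a) (s : ℂ) :
    ‖pf a s‖ = a ^ s.re / (‖s‖ * ‖s+1‖) := by
  simp [pf, Complex.norm_cpow_eq_rpow_re_of_pos ha]

lemma pf_diffOn {a : ℝ} (ha : 0 < a) :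
    DifferentiableOn ℂ (pf a) {s : ℂ | 0 < s.re} := by
  intro s hs
  apply DifferentiableAt.differentiableWithinAt
  have h0 : s ≠ 0 := by
    intro h; rw [h] at hs; simp at hs
  have h1 : s + 1 ≠ 0 := by
    intro h
    have : (s+1).re = 0 := by rw [h]; simp
    simp only [Complex.add_re, Complex.one_re] at this
    have := hs.out; linarith
  have hane : (a:ℂ) ≠ 0 := by
    exact_mod_cast ha.ne'
  exact (differentiableAt_id.const_cpow (Or.inl hane)).div
    (differentiableAt_id.mul (differentiableAt_id.add_const 1)) (mul_ne_zero h0 h1)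

lemma pf_bound {a b t1 t2 : ℝ} (ha : 0 < a) (ha1 : a < 1) (ht1 : 0 < t1) (ht2 : 0 < t2)
    {s : ℂ} (hre : b ≤ s.re) (h1 : t1 ≤ ‖s‖) (h2 : t2 ≤ ‖s+1‖) :
    ‖pf a s‖ ≤ a ^ b / (t1 * t2) := by
  rw [pf_norm ha]
  apply div_le_div₀ (by positivity)
    (Real.rpow_le_rpow_of_exponent_ge ha ha1.le hre) (by positivity)
  exact mul_le_mul h1 h2 ht2.le (ht1.trans_le h1).le

lemma pf_comp_contOn {a : ℝ} (ha : 0 < a) {g : ℝ → ℂ} (hg : Continuous g) {s : Set ℝ}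
    (h : ∀ x ∈ s, 0 < (g x).re) : ContinuousOn (fun x => pf a (g x)) s :=
  (pf_diffOn ha).continuousOn.comp hg.continuousOn (fun x hx => h x hx)

lemma rect_id {a b T X : ℝ} (ha : 0 < a) (hb : 0 < b) (hX : b ≤ X) :
    Complex.I • ∫ y in (-T)..T, pf a (b + y * Complex.I) =
      (∫ x in b..X, pf a (x + (-T) * Complex.I)) - (∫ x in b..X, pf a (x + T * Complex.I))
        + Complex.I • ∫ y in (-T)..T, pf a (X + y * Complex.I) := by
  have hd : DifferentiableOn ℂ (pf a)
      (Set.uIcc (⟨b, -T⟩ : ℂ).re (⟨X, T⟩ : ℂ).re ×ℂ Set.uIcc (⟨b, -T⟩ : ℂ).im (⟨X, T⟩ : ℂ).im) := by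
    apply (pf_diffOn ha).mono
    rintro s ⟨hs1, -⟩
    simp only [Set.mem_preimage, Set.uIcc_of_le hX, Set.mem_Icc] at hs1
    exact lt_of_lt_of_le hb hs1.1
  have H := Complex.integral_boundary_rect_eq_zero_of_differentiableOn (pf a)
    (⟨b, -T⟩ : ℂ) (⟨X, T⟩ : ℂ) hd
  simp only [smul_eq_mul, Complex.ofReal_neg] at H ⊢
  linear_combination -H

lemma re_aux (x c : ℝ) : ((x : ℂ) + (c : ℂ) * Complex.I).re = x := by simp

lemma im_aux (x c : ℝ) : ((x : ℂ) + (c : ℂ) * Complex.I).im = c := by simp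

lemma horiz_const_bound {a b T X c : ℝ} (ha : 0 < a) (ha1 : a < 1) (hb : 0 < b) (hT : 0 < T)
    (hbX : b ≤ X) (hc : |c| = T) :
    ‖∫ x in b..X, pf a (x + c * Complex.I)‖ ≤ a ^ b / (T * T) * (X - b) := by
  have h := intervalIntegral.norm_integral_le_of_norm_le_const (C := a ^ b / (T * T))
    (f := fun x : ℝ => pf a (x + c * Complex.I)) (a := b) (b := X) ?_
  · rwa [_root_.abs_of_nonneg (by linarith : (0:ℝ) ≤ X - b)] at h
  · intro x hx
    rw [Set.uIoc_of_le hbX] at hx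
    apply pf_bound ha ha1 hT hT
    · rw [re_aux]; exact hx.1.le
    · calc T = |c| := hc.symm
        _ = |((x : ℂ) + (c : ℂ) * Complex.I).im| := by rw [im_aux]
        _ ≤ ‖_‖ := Complex.abs_im_le_norm _
    · calc T = |c| := hc.symm
        _ = |((x : ℂ) + (c : ℂ) * Complex.I + 1).im| := by simp
        _ ≤ ‖_‖ := Complex.abs_im_le_norm _

lemma vert_bound {a b T X : ℝ} (ha : 0 < a) (ha1 : a < 1) (hb : 0 < b) (hT : 0 < T)
    (hX : b + T ≤ X) :
    ‖∫ y in (-T)..T, pf a (X + y * Complex.I)‖ ≤ a ^ X / (T * T) * (2 * T) := by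
  have hTX : T ≤ X := by linarith
  have h := intervalIntegral.norm_integral_le_of_norm_le_const (C := a ^ X / (T * T))
    (f := fun y : ℝ => pf a (X + y * Complex.I)) (a := -T) (b := T) ?_
  · rwa [show |T - -T| = 2 * T by rw [_root_.abs_of_nonneg] <;> linarith] at h
  · intro y _
    apply pf_bound ha ha1 hT hT
    · rw [re_aux]
    · calc T ≤ X := hTX
        _ = ((X : ℂ) + (y : ℂ) * Complex.I).re := (re_aux X y).symm
        _ ≤ ‖_‖ := Complex.re_le_norm _
    · calc T ≤ X + 1 := by linarith
        _ = ((X : ℂ) + (y : ℂ) * Complex.I + 1).re := by simp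
        _ ≤ ‖_‖ := Complex.re_le_norm _

lemma norm_I_smul (v : ℂ) : ‖Complex.I • v‖ = ‖v‖ := by
  rw [smul_eq_mul, norm_mul, Complex.norm_I, one_mul]

lemma V_bound1 {a b T : ℝ} (ha : 0 < a) (ha1 : a < 1) (hb : 0 < b) (hT : 0 < T) :
    ‖Complex.I • ∫ y in (-T)..T, pf a (b + y * Complex.I)‖ ≤ 4 * a ^ b / T := by
  rw [rect_id (X := b + T) ha hb (by linarith)]
  have h1 := horiz_const_bound (X := b + T) (c := -T) ha ha1 hb hT (by linarith)
    (by rw [abs_neg, _root_.abs_of_nonneg hT.le])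
  have h2 := horiz_const_bound (X := b + T) (c := T) ha ha1 hb hT (by linarith)
    (_root_.abs_of_nonneg hT.le)
  have h3 := vert_bound (X := b + T) ha ha1 hb hT le_rfl
  simp only [Complex.ofReal_neg] at h1 ⊢
  have hab : a ^ (b + T) ≤ a ^ b := Real.rpow_le_rpow_of_exponent_ge ha ha1.le (by linarith)
  have hT2 : (0:ℝ) < T * T := by positivity
  have h3' : ‖∫ y in (-T)..T, pf a ((b + T : ℝ) + y * Complex.I)‖ ≤ a ^ b / (T * T) * (2 * T) :=
    h3.trans (by gcongr)
  have hsum : a ^ b / (T * T) * (b + T - b) + a ^ b / (T * T) * (b + T - b)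
      + a ^ b / (T * T) * (2 * T) = 4 * a ^ b / T := by field_simp; ring
  set A : ℂ := ∫ x : ℝ in b..(b+T), pf a ((x : ℂ) + -(T:ℂ) * Complex.I) with hA
  set B : ℂ := ∫ x : ℝ in b..(b+T), pf a ((x : ℂ) + (T:ℂ) * Complex.I) with hB
  set Cv : ℂ := ∫ y : ℝ in (-T)..T, pf a (((b+T : ℝ) : ℂ) + (y:ℂ) * Complex.I) with hC
  have key : ‖A - B + Complex.I • Cv‖ ≤ ‖A‖ + ‖B‖ + ‖Cv‖ := by
    refine (norm_add_le _ _).trans ?_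
    rw [norm_I_smul]
    have := norm_sub_le A B
    linarith
  linarith [key, h1, h2, h3', hsum]

lemma horiz_exp_bound {a b T X c : ℝ} (ha : 0 < a) (ha1 : a < 1) (hb : 0 < b) (hT : 0 < T)
    (hbX : b ≤ X) (hc : |c| = T) :
    ‖∫ x in b..X, pf a (x + c * Complex.I)‖ ≤ a ^ b / (T ^ 2 * |Real.log a|) := by
  set L := Real.log a with hLdef
  have hL : L < 0 := Real.log_neg ha ha1
  have hcont : ContinuousOn (fun x : ℝ => pf a ((x : ℂ) + c * Complex.I)) (Set.uIcc b X) := by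
    apply pf_comp_contOn ha (by continuity)
    intro x hx
    rw [Set.uIcc_of_le hbX] at hx
    rw [re_aux]; exact lt_of_lt_of_le hb hx.1
  have step1 : ‖∫ x in b..X, pf a (x + c * Complex.I)‖
      ≤ ∫ x in b..X, Real.exp (L * x) / (T * T) := by
    refine (intervalIntegral.norm_integral_le_integral_norm hbX).trans ?_
    apply intervalIntegral.integral_mono_on hbX
    · exact hcont.norm.intervalIntegrable
    · exact ((Real.continuous_exp.comp (continuous_const.mul continuous_id)).div_const _).intervalIntegrable _ _
    · intro x hx
      have hbd : ‖pf a ((x:ℂ) + c * Complex.I)‖ ≤ a ^ x / (T * T) := by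
        apply pf_bound ha ha1 hT hT (le_of_eq (re_aux x c).symm)
        · calc T = |c| := hc.symm
            _ = |((x : ℂ) + (c : ℂ) * Complex.I).im| := by rw [im_aux]
            _ ≤ ‖_‖ := Complex.abs_im_le_norm _
        · calc T = |c| := hc.symm
            _ = |((x : ℂ) + (c : ℂ) * Complex.I + 1).im| := by simp
            _ ≤ ‖_‖ := Complex.abs_im_le_norm _
      rwa [Real.rpow_def_of_pos ha] at hbd
  have step3 : ∫ x in b..X, Real.exp (L * x) = L⁻¹ * (Real.exp (L * X) - Real.exp (L * b)) := by
    rw [intervalIntegral.integral_comp_mul_left Real.exp hL.ne, integral_exp, smul_eq_mul]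
  have step2 : ∫ x in b..X, Real.exp (L * x) / (T * T)
      = L⁻¹ * (Real.exp (L * X) - Real.exp (L * b)) / (T * T) := by
    rw [intervalIntegral.integral_div, step3]
  have h4 : L⁻¹ * (Real.exp (L * X) - Real.exp (L * b)) ≤ Real.exp (L * b) / (-L) := by
    rw [div_eq_mul_inv]
    have hinv : (0:ℝ) < (-L)⁻¹ := inv_pos.mpr (neg_pos.mpr hL)
    have heq : L⁻¹ * (Real.exp (L * X) - Real.exp (L * b))
        = (Real.exp (L * b) - Real.exp (L * X)) * (-L)⁻¹ := by
      rw [inv_neg]; ring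
    rw [heq]
    have := (Real.exp_pos (L * X)).le
    nlinarith [Real.exp_pos (L * b)]
  have hfin : Real.exp (L * b) / (-L) / (T * T) = a ^ b / (T ^ 2 * |Real.log a|) := by
    rw [← hLdef, abs_of_neg hL, Real.rpow_def_of_pos ha]
    field_simp
    rw [hLdef]; ring_nf
  calc ‖∫ x in b..X, pf a (x + c * Complex.I)‖
      ≤ ∫ x in b..X, Real.exp (L * x) / (T * T) := step1
    _ = L⁻¹ * (Real.exp (L * X) - Real.exp (L * b)) / (T * T) := step2
    _ ≤ Real.exp (L * b) / (-L) / (T * T) := by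
        gcongr
    _ = a ^ b / (T ^ 2 * |Real.log a|) := hfin

lemma V_bound2 {a b T : ℝ} (ha : 0 < a) (ha1 : a < 1) (hb : 0 < b) (hT : 0 < T) :
    ‖Complex.I • ∫ y in (-T)..T, pf a (b + y * Complex.I)‖
      ≤ 2 * (a ^ b / (T ^ 2 * |Real.log a|)) := by
  refine le_of_forall_pos_le_add fun ε hε => ?_
  -- choose X large
  have htend : Filter.Tendsto (fun X : ℝ => a ^ X) Filter.atTop (nhds 0) :=
    tendsto_rpow_atTop_of_base_lt_one a (by linarith) ha1
  have hev : ∀ᶠ X : ℝ in Filter.atTop, a ^ X < ε * T / 2 :=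
    htend.eventually_lt_const (by positivity)
  obtain ⟨X, hX1, hX2⟩ := (hev.and (Filter.eventually_ge_atTop (b + T))).exists
  rw [rect_id (X := X) ha hb (by linarith)]
  have h1 := horiz_exp_bound (X := X) (c := -T) ha ha1 hb hT (by linarith)
    (by rw [abs_neg, _root_.abs_of_nonneg hT.le])
  have h2 := horiz_exp_bound (X := X) (c := T) ha ha1 hb hT (by linarith)
    (_root_.abs_of_nonneg hT.le)
  have h3 := vert_bound (X := X) ha ha1 hb hT hX2
  simp only [Complex.ofReal_neg] at h1 ⊢
  have h3' : ‖∫ y in (-T)..T, pf a ((X : ℝ) + y * Complex.I)‖ ≤ ε := by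
    refine h3.trans ?_
    have : a ^ X / (T * T) * (2 * T) = a ^ X * (2 / T) := by field_simp
    rw [this]
    calc a ^ X * (2 / T) ≤ (ε * T / 2) * (2 / T) := by
          apply mul_le_mul_of_nonneg_right hX1.le (by positivity)
      _ = ε := by field_simp
  set A : ℂ := ∫ x : ℝ in b..X, pf a ((x : ℂ) + -(T:ℂ) * Complex.I) with hA
  set B : ℂ := ∫ x : ℝ in b..X, pf a ((x : ℂ) + (T:ℂ) * Complex.I) with hB
  set Cv : ℂ := ∫ y : ℝ in (-T)..T, pf a ((X : ℂ) + (y:ℂ) * Complex.I) with hC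
  have key : ‖A - B + Complex.I • Cv‖ ≤ ‖A‖ + ‖B‖ + ‖Cv‖ := by
    refine (norm_add_le _ _).trans ?_
    rw [norm_I_smul]
    have := norm_sub_le A B
    linarith
  linarith [key, h1, h2, h3']

lemma V_min_bound {a b T : ℝ} (ha : 0 < a) (ha1 : a < 1) (hb : 0 < b) (hT : 0 < T) :
    ‖Complex.I • ∫ y in (-T)..T, pf a (b + y * Complex.I)‖
      ≤ 4 * (a ^ b * min (1 / T) (1 / (T ^ 2 * |Real.log a|))) := by
  rcases min_cases (1 / T) (1 / (T ^ 2 * |Real.log a|)) with ⟨hm, -⟩ | ⟨hm, -⟩ <;> rw [hm]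
  · have := V_bound1 ha ha1 hb hT
    calc _ ≤ 4 * a ^ b / T := this
      _ = 4 * (a ^ b * (1 / T)) := by ring
  · have := V_bound2 ha ha1 hb hT
    calc _ ≤ 2 * (a ^ b / (T ^ 2 * |Real.log a|)) := this
      _ ≤ 4 * (a ^ b * (1 / (T ^ 2 * |Real.log a|))) := by
          rw [div_eq_mul_one_div]
          nlinarith [Real.rpow_pos_of_pos ha b, one_div_nonneg.mpr
            (mul_nonneg (sq_nonneg T) (abs_nonneg (Real.log a)))]

theorem stmt_3 :
    ∃ C > 0, ∀ a b T : ℝ, 0 < a → a < 1 → 0 < b → 0 < T →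
      ∃ R₂ : ℂ,
        (1 / (2 * Real.pi * Complex.I)) *
            ∫ t in (-T)..T,
              (a : ℂ) ^ ((b : ℂ) + t * Complex.I) /
                  (((b : ℂ) + t * Complex.I) * ((b : ℂ) + t * Complex.I + 1)) * Complex.I
          = R₂ ∧
        ‖R₂‖ ≤ C * a ^ b * min (1 / T) (1 / (T ^ 2 * |Real.log a|)) := by
  refine ⟨1, one_pos, fun a b T ha ha1 hb hT => ⟨_, rfl, ?_⟩⟩
  have heq : (∫ t in (-T)..T,
        (a : ℂ) ^ ((b : ℂ) + t * Complex.I) /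
          (((b : ℂ) + t * Complex.I) * ((b : ℂ) + t * Complex.I + 1)) * Complex.I)
      = Complex.I • ∫ t in (-T)..T, pf a ((b : ℂ) + t * Complex.I) := by
    rw [intervalIntegral.integral_mul_const, smul_eq_mul, mul_comm]
    rfl
  rw [heq, norm_mul]
  have hnorm : ‖(1 / (2 * (Real.pi : ℂ) * Complex.I))‖ = 1 / (2 * Real.pi) := by
    rw [norm_div, norm_one, norm_mul, norm_mul, Complex.norm_I, mul_one]
    norm_num [Complex.norm_real, Real.norm_eq_abs, _root_.abs_of_pos Real.pi_pos]
  rw [hnorm]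
  have hV := V_min_bound ha ha1 hb hT
  set M : ℝ := a ^ b * min (1 / T) (1 / (T ^ 2 * |Real.log a|)) with hM
  have hM0 : 0 ≤ M := by
    apply mul_nonneg (Real.rpow_pos_of_pos ha b).le
    apply le_min (by positivity)
    have : 0 < |Real.log a| := abs_pos.mpr (Real.log_neg ha ha1).ne
    positivity
  have hpi : (3:ℝ) < Real.pi := Real.pi_gt_three
  calc 1 / (2 * Real.pi) * ‖Complex.I • ∫ y in (-T)..T, pf a ((b:ℂ) + y * Complex.I)‖
      ≤ 1 / (2 * Real.pi) * (4 * M) := by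
        apply mul_le_mul_of_nonneg_left hV (by positivity)
    _ ≤ 1 * M := by
        rw [one_mul, div_mul_eq_mul_div, div_le_iff₀ (by positivity)]
        nlinarith
    _ = 1 * a ^ b * min (1 / T) (1 / (T ^ 2 * |Real.log a|)) := by rw [hM]; ring
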